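/- Let H_A, H_B be finite-dimensional Hilbert spaces and α : H → H_A ⊗ H_B a linear isometry from another finite-dimensional Hilbert space H. Suppose there is a constant c > 0 with |⟨α(ξ), η ⊗ ζ⟩| ≤ c for all unit vectors ξ ∈ H, η ∈ H_A, ζ ∈ H_B. For t ≥ 0 define the operator C_t := I_{H_A ⊗ H_B} − t·αα* on H_A ⊗ H_B. Then for every natural number d ≥ 1 and every vector x ∈ H_A ⊗ H_B of Schmidt rank at most d, one has ⟨C_t x, x⟩ ≥ ‖x‖²·(1 − t·d·c²). In particular if t ≤ 1/(d·c²) then ⟨C_t x, x⟩ ≥ 0 for all such x. -/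

import Mathlib

open scoped InnerProductSpace

/-- The elementary tensor of two vectors, in the Euclidean model of H_A ⊗ H_B. -/
noncomputable def tensor {a b : ℕ} (η : EuclideanSpace ℂ (Fin a))
    (ζ : EuclideanSpace ℂ (Fin b)) : EuclideanSpace ℂ (Fin a × Fin b) :=
  WithLp.toLp 2 (fun p : Fin a × Fin b => η p.1 * ζ p.2)

lemma tensor_inner {a b : ℕ} (η η' : EuclideanSpace ℂ (Fin a))
    (ζ ζ' : EuclideanSpace ℂ (Fin b)) :
    ⟪tensor η ζ, tensor η' ζ'⟫_ℂ = ⟪η, η'⟫_ℂ * ⟪ζ, ζ'⟫_ℂ := by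
  simp only [tensor, PiLp.inner_apply, RCLike.inner_apply, map_mul, WithLp.ofLp_toLp]
  rw [Fintype.sum_prod_type, Finset.sum_mul_sum]
  exact Finset.sum_congr rfl fun i _ => Finset.sum_congr rfl fun j _ => by ring

lemma choi_aux (nx na t D c2 : ℝ) (ht : 0 ≤ t) (hD : 0 < D) (hc2 : 0 < c2)
    (h2 : na ^ 2 ≤ D * c2 * nx ^ 2) :
    nx ^ 2 * (1 - t * D * c2) ≤ nx ^ 2 - t * na ^ 2 ∧
      (t ≤ 1 / (D * c2) → 0 ≤ nx ^ 2 - t * na ^ 2) := by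
  have hb : t * na ^ 2 ≤ t * (D * c2 * nx ^ 2) := mul_le_mul_of_nonneg_left h2 ht
  constructor
  · nlinarith
  · intro htle
    have hdc : (0:ℝ) < D * c2 := mul_pos hD hc2
    have ht1 : t * (D * c2) ≤ 1 := by
      rw [le_div_iff₀ hdc] at htle; linarith
    have hb2 : nx ^ 2 * (t * (D * c2)) ≤ nx ^ 2 :=
      mul_le_of_le_one_right (sq_nonneg nx) ht1
    nlinarith

set_option maxHeartbeats 1600000 in
theorem choi_matrix_d_positivity (h a b : ℕ)
    (α : EuclideanSpace ℂ (Fin h) →ₗᵢ[ℂ] EuclideanSpace ℂ (Fin a × Fin b))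
    (c : ℝ) (hc : 0 < c)
    (hα : ∀ (ξ : EuclideanSpace ℂ (Fin h)) (η : EuclideanSpace ℂ (Fin a))
      (ζ : EuclideanSpace ℂ (Fin b)), ‖ξ‖ = 1 → ‖η‖ = 1 → ‖ζ‖ = 1 →
        ‖⟪α ξ, tensor η ζ⟫_ℂ‖ ≤ c)
    (t : ℝ) (ht : 0 ≤ t) (d : ℕ) (hd : 1 ≤ d)
    (lam : Fin d → ℝ) (hlam : ∀ i, 0 < lam i)
    (e : Fin d → EuclideanSpace ℂ (Fin a)) (f : Fin d → EuclideanSpace ℂ (Fin b))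
    (he : Orthonormal ℂ e) (hf : Orthonormal ℂ f)
    (x : EuclideanSpace ℂ (Fin a × Fin b))
    (hx : x = ∑ i, (Real.sqrt (lam i) : ℂ) • tensor (e i) (f i)) :
    ‖x‖ ^ 2 * (1 - t * d * c ^ 2) ≤
      (⟪x - (t : ℂ) • α (LinearMap.adjoint α.toLinearMap x), x⟫_ℂ).re ∧
    (t ≤ 1 / (d * c ^ 2) →
      0 ≤ (⟪x - (t : ℂ) • α (LinearMap.adjoint α.toLinearMap x), x⟫_ℂ).re) := by
  classical
  set A := LinearMap.adjoint α.toLinearMap with hA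
  set g : Fin d → EuclideanSpace ℂ (Fin a × Fin b) := fun i => tensor (e i) (f i) with hgdef
  -- orthonormality of the elementary tensors
  have hg : Orthonormal ℂ g := by
    rw [orthonormal_iff_ite]
    intro i j
    have := tensor_inner (e i) (e j) (f i) (f j)
    rw [hgdef]
    simp only [this]
    rw [orthonormal_iff_ite] at he hf
    rw [he i j, hf i j]
    by_cases hij : i = j <;> simp [hij]
  -- ‖x‖² = ∑ lam i
  have hxx : ‖x‖ ^ 2 = ∑ i, lam i := by
    have h1 : ⟪x, x⟫_ℂ = ∑ i, (starRingEnd ℂ) ((Real.sqrt (lam i) : ℂ)) *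
        (Real.sqrt (lam i) : ℂ) := by
      rw [hx]
      exact hg.inner_sum _ _ _
    have h2 : ⟪x, x⟫_ℂ = ((∑ i, lam i : ℝ) : ℂ) := by
      rw [h1]
      push_cast
      refine Finset.sum_congr rfl fun i _ => ?_
      rw [Complex.conj_ofReal, ← Complex.ofReal_mul,
        Real.mul_self_sqrt (hlam i).le]
    have h3 : (⟪x, x⟫_ℂ).re = ‖x‖ ^ 2 := by
      rw [inner_self_eq_norm_sq_to_K]; norm_cast
    rw [← h3, h2, Complex.ofReal_re]
  -- each α*(eᵢ ⊗ fᵢ) has norm ≤ c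
  have hAg : ∀ i, ‖A (g i)‖ ≤ c := by
    intro i
    by_cases hw : A (g i) = 0
    · simp [hw, hc.le]
    · set w := A (g i) with hwdef
      have hwn : (0:ℝ) < ‖w‖ := norm_pos_iff.2 hw
      have hξ : ‖((‖w‖ : ℂ))⁻¹ • w‖ = 1 := by
        rw [norm_smul]
        simp [hwn.ne']
      have key := hα (((‖w‖ : ℂ))⁻¹ • w) (e i) (f i) hξ (he.1 i) (hf.1 i)
      have hαw : ⟪α w, tensor (e i) (f i)⟫_ℂ = ((‖w‖ : ℂ)) ^ 2 := by
        have := LinearMap.adjoint_inner_right α.toLinearMap w (g i)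
        rw [← hA] at this
        calc ⟪α w, tensor (e i) (f i)⟫_ℂ = ⟪α.toLinearMap w, g i⟫_ℂ := rfl
          _ = ⟪w, A (g i)⟫_ℂ := this.symm
          _ = ⟪w, w⟫_ℂ := by rw [← hwdef]
          _ = ((‖w‖ : ℂ)) ^ 2 := by
              rw [inner_self_eq_norm_sq_to_K]; norm_cast
      rw [map_smul, inner_smul_left, hαw] at key
      have : ‖(starRingEnd ℂ) ((‖w‖:ℂ))⁻¹ * ((‖w‖:ℂ)) ^ 2‖ = ‖w‖ := by
        rw [norm_mul, norm_pow]
        simp [hwn.ne']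
        field_simp
      rw [this] at key
      exact key
  -- ‖A x‖ ≤ (∑ √lam) * c
  have hAx : ‖A x‖ ≤ (∑ i, Real.sqrt (lam i)) * c := by
    have hax : A x = ∑ i, (Real.sqrt (lam i) : ℂ) • A (g i) := by
      rw [hx, map_sum]
      exact Finset.sum_congr rfl fun i _ => map_smul A _ _
    rw [hax, Finset.sum_mul]
    refine (norm_sum_le _ _).trans (Finset.sum_le_sum fun i _ => ?_)
    rw [norm_smul]
    have h1 : ‖((Real.sqrt (lam i) : ℝ) : ℂ)‖ = Real.sqrt (lam i) := by
      simp [Real.sqrt_nonneg]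
    rw [h1]
    exact mul_le_mul_of_nonneg_left (hAg i) (Real.sqrt_nonneg _)
  -- Cauchy–Schwarz step
  have hCS : (∑ i, Real.sqrt (lam i)) ^ 2 ≤ (d : ℝ) * ∑ i, lam i := by
    have := sq_sum_le_card_mul_sum_sq (s := (Finset.univ : Finset (Fin d)))
      (f := fun i => Real.sqrt (lam i))
    simpa [Real.sq_sqrt (hlam _).le] using this
  have hAx2 : ‖A x‖ ^ 2 ≤ (d : ℝ) * c ^ 2 * ‖x‖ ^ 2 := by
    have h1 : ‖A x‖ ^ 2 ≤ ((∑ i, Real.sqrt (lam i)) * c) ^ 2 := by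
      have hnn : (0:ℝ) ≤ ‖A x‖ := norm_nonneg _
      nlinarith [hAx]
    calc ‖A x‖ ^ 2 ≤ ((∑ i, Real.sqrt (lam i)) * c) ^ 2 := h1
      _ = (∑ i, Real.sqrt (lam i)) ^ 2 * c ^ 2 := by ring
      _ ≤ ((d : ℝ) * ∑ i, lam i) * c ^ 2 := by nlinarith [sq_nonneg c]
      _ = (d : ℝ) * c ^ 2 * ‖x‖ ^ 2 := by rw [hxx]; ring
  -- the quadratic form evaluates to ‖x‖² - t‖A x‖²
  have hmain : (⟪x - (t : ℂ) • α (A x), x⟫_ℂ).re = ‖x‖ ^ 2 - t * ‖A x‖ ^ 2 := by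
    have h2 : ⟪α (A x), x⟫_ℂ = ((‖A x‖ : ℂ)) ^ 2 := by
      have := LinearMap.adjoint_inner_right α.toLinearMap (A x) x
      rw [← hA] at this
      calc ⟪α (A x), x⟫_ℂ = ⟪α.toLinearMap (A x), x⟫_ℂ := rfl
        _ = ⟪A x, A x⟫_ℂ := this.symm
        _ = ((‖A x‖ : ℂ)) ^ 2 := by rw [inner_self_eq_norm_sq_to_K]; norm_cast
    have h3 : ⟪x - (t : ℂ) • α (A x), x⟫_ℂ
        = ⟪x, x⟫_ℂ - (starRingEnd ℂ) (t : ℂ) * ⟪α (A x), x⟫_ℂ := by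
      rw [inner_sub_left, inner_smul_left]
    rw [h3, h2, inner_self_eq_norm_sq_to_K, Complex.conj_ofReal]
    norm_cast
  rw [hmain]
  have hD : (0:ℝ) < (d : ℝ) := by exact_mod_cast Nat.lt_of_lt_of_le Nat.zero_lt_one hd
  have := choi_aux ‖x‖ ‖A x‖ t (d : ℝ) (c ^ 2) ht hD (by positivity) hAx2
  exact ⟨by linarith [this.1], fun htle => this.2 (by rw [one_div] at htle ⊢; exact htle)⟩
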